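/- Let B₁, B₂ : 𝔻 → 𝔻 be finite Blaschke products of degree at most m-1, and suppose B₁(λⱼ) = B₂(λⱼ) at m pairwise distinct points λ₁,…,λ_m ∈ 𝔻. Then B₁ = B₂ identically on 𝔻. -/

import Mathlib

open Complex Metric

/-- `B` is a finite Blaschke product of degree at most `d` (as a function on the unit disc). -/
def IsBlaschkeOfDegLE (d : ℕ) (B : ℂ → ℂ) : Prop :=
  ∃ (n : ℕ) (ζ : ℂ) (a : Fin n → ℂ), n ≤ d ∧ ‖ζ‖ = 1 ∧
    (∀ k, a k ∈ ball (0 : ℂ) 1) ∧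
    ∀ z ∈ ball (0 : ℂ) 1,
      B z = ζ * ∏ k, ((a k - z) / (1 - (starRingEnd ℂ) (a k) * z))

lemma blaschke_denom_ne_zero {c z : ℂ} (hc : c ∈ ball (0 : ℂ) 1) (hz : z ∈ ball (0 : ℂ) 1) :
    (1 : ℂ) - (starRingEnd ℂ) c * z ≠ 0 := by
  simp only [mem_ball, dist_zero_right] at hc hz
  intro h
  have h1 : (starRingEnd ℂ) c * z = 1 := by linear_combination -h
  have h2 : ‖(starRingEnd ℂ) c * z‖ = 1 := by rw [h1]; simp
  rw [norm_mul, Complex.norm_conj] at h2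
  nlinarith [norm_nonneg c, norm_nonneg z]

theorem blaschke_uniqueness (m : ℕ) (hm : 1 ≤ m) (B₁ B₂ : ℂ → ℂ)
    (hB₁ : IsBlaschkeOfDegLE (m - 1) B₁) (hB₂ : IsBlaschkeOfDegLE (m - 1) B₂)
    (lam : Fin m → ℂ) (hlam : ∀ j, lam j ∈ ball (0 : ℂ) 1)
    (hinj : Function.Injective lam)
    (heq : ∀ j, B₁ (lam j) = B₂ (lam j)) :
    ∀ z ∈ ball (0 : ℂ) 1, B₁ z = B₂ z := by
  classical
  obtain ⟨n₁, ζ₁, a, hn₁, hζ₁, ha, hb₁⟩ := hB₁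
  obtain ⟨n₂, ζ₂, b, hn₂, hζ₂, hb, hb₂⟩ := hB₂
  set A₁ : Polynomial ℂ := ∏ k, (Polynomial.C (a k) - Polynomial.X) with hA₁
  set D₁ : Polynomial ℂ := ∏ k, (1 - Polynomial.C ((starRingEnd ℂ) (a k)) * Polynomial.X) with hD₁
  set A₂ : Polynomial ℂ := ∏ k, (Polynomial.C (b k) - Polynomial.X) with hA₂
  set D₂ : Polynomial ℂ := ∏ k, (1 - Polynomial.C ((starRingEnd ℂ) (b k)) * Polynomial.X) with hD₂
  set Q : Polynomial ℂ := Polynomial.C ζ₁ * A₁ * D₂ - Polynomial.C ζ₂ * A₂ * D₁ with hQdef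
  have evalA₁ : ∀ z : ℂ, A₁.eval z = ∏ k, (a k - z) := by
    intro z; simp [hA₁, Polynomial.eval_prod]
  have evalA₂ : ∀ z : ℂ, A₂.eval z = ∏ k, (b k - z) := by
    intro z; simp [hA₂, Polynomial.eval_prod]
  have evalD₁ : ∀ z : ℂ, D₁.eval z = ∏ k, (1 - (starRingEnd ℂ) (a k) * z) := by
    intro z; simp [hD₁, Polynomial.eval_prod]
  have evalD₂ : ∀ z : ℂ, D₂.eval z = ∏ k, (1 - (starRingEnd ℂ) (b k) * z) := by
    intro z; simp [hD₂, Polynomial.eval_prod]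
  have hpd₁ : ∀ z ∈ ball (0 : ℂ) 1, (∏ k, ((1 : ℂ) - (starRingEnd ℂ) (a k) * z)) ≠ 0 :=
    fun z hz => Finset.prod_ne_zero_iff.2 fun k _ => blaschke_denom_ne_zero (ha k) hz
  have hpd₂ : ∀ z ∈ ball (0 : ℂ) 1, (∏ k, ((1 : ℂ) - (starRingEnd ℂ) (b k) * z)) ≠ 0 :=
    fun z hz => Finset.prod_ne_zero_iff.2 fun k _ => blaschke_denom_ne_zero (hb k) hz
  have evalQ : ∀ z : ℂ, Q.eval z
      = ζ₁ * ((∏ k, (a k - z)) * ∏ k, (1 - (starRingEnd ℂ) (b k) * z))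
        - ζ₂ * ((∏ k, (b k - z)) * ∏ k, (1 - (starRingEnd ℂ) (a k) * z)) := by
    intro z
    simp [hQdef, evalA₁, evalA₂, evalD₁, evalD₂, mul_assoc]
  -- the points lam j are roots of Q
  have hQlam : ∀ j, Q.eval (lam j) = 0 := by
    intro j
    have h := heq j
    rw [hb₁ _ (hlam j), hb₂ _ (hlam j), Finset.prod_div_distrib, Finset.prod_div_distrib] at h
    have h1 := hpd₁ _ (hlam j)
    have h2 := hpd₂ _ (hlam j)
    rw [evalQ, sub_eq_zero]
    rw [mul_div_assoc', mul_div_assoc', div_eq_div_iff h1 h2] at h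
    linear_combination h
  -- unimodularity
  have hζ₁0 : ζ₁ ≠ 0 := by intro h; rw [h] at hζ₁; simp at hζ₁
  have hζ₂0 : ζ₂ ≠ 0 := by intro h; rw [h] at hζ₂; simp at hζ₂
  have u₁ : ζ₁ * (starRingEnd ℂ) ζ₁ = 1 := by
    rw [Complex.mul_conj]; norm_cast; simp [Complex.normSq_eq_norm_sq, hζ₁]
  have u₂ : ζ₂ * (starRingEnd ℂ) ζ₂ = 1 := by
    rw [Complex.mul_conj]; norm_cast; simp [Complex.normSq_eq_norm_sq, hζ₂]
  -- reflected points are also roots of Q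
  have hQrefl : ∀ z : ℂ, z ∈ ball (0 : ℂ) 1 → z ≠ 0 → Q.eval z = 0 →
      Q.eval (((starRingEnd ℂ) z)⁻¹) = 0 := by
    intro z hz hz0 hQz
    have hcz : (starRingEnd ℂ) z ≠ 0 := by simpa using hz0
    set w : ℂ := ((starRingEnd ℂ) z)⁻¹ with hw
    have e1 : ∀ c : ℂ, c - w = -w * (starRingEnd ℂ) (1 - (starRingEnd ℂ) c * z) := by
      intro c
      simp only [map_sub, map_one, map_mul, Complex.conj_conj, hw]
      field_simp
      ring
    have e2 : ∀ c : ℂ, 1 - (starRingEnd ℂ) c * w = -w * (starRingEnd ℂ) (c - z) := by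
      intro c
      simp only [map_sub, hw]
      field_simp
      ring
    have pA : ∀ (n : ℕ) (f : Fin n → ℂ),
        (∏ k, (f k - w)) = (-w) ^ n * (starRingEnd ℂ) (∏ k, (1 - (starRingEnd ℂ) (f k) * z)) := by
      intro n f
      rw [map_prod, show ((-w) ^ n : ℂ) = ∏ _k : Fin n, (-w) by simp, ← Finset.prod_mul_distrib]
      exact Finset.prod_congr rfl fun k _ => e1 (f k)
    have pD : ∀ (n : ℕ) (f : Fin n → ℂ),
        (∏ k, (1 - (starRingEnd ℂ) (f k) * w)) = (-w) ^ n * (starRingEnd ℂ) (∏ k, (f k - z)) := by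
      intro n f
      rw [map_prod, show ((-w) ^ n : ℂ) = ∏ _k : Fin n, (-w) by simp, ← Finset.prod_mul_distrib]
      exact Finset.prod_congr rfl fun k _ => e2 (f k)
    have hrel : ζ₁ * ((∏ k, (a k - z)) * ∏ k, (1 - (starRingEnd ℂ) (b k) * z))
        = ζ₂ * ((∏ k, (b k - z)) * ∏ k, (1 - (starRingEnd ℂ) (a k) * z)) := by
      have h := hQz; rw [evalQ, sub_eq_zero] at h; exact h
    have hrelc := congrArg (starRingEnd ℂ) hrel
    simp only [map_mul] at hrelc
    have key : ζ₂ * ((starRingEnd ℂ) (∏ k, (a k - z))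
          * (starRingEnd ℂ) (∏ k, (1 - (starRingEnd ℂ) (b k) * z)))
        = ζ₁ * ((starRingEnd ℂ) (∏ k, (b k - z))
          * (starRingEnd ℂ) (∏ k, (1 - (starRingEnd ℂ) (a k) * z))) := by
      linear_combination ζ₁ * ζ₂ * hrelc
        - ζ₂ * (starRingEnd ℂ) (∏ k, (a k - z))
            * (starRingEnd ℂ) (∏ k, (1 - (starRingEnd ℂ) (b k) * z)) * u₁
        + ζ₁ * (starRingEnd ℂ) (∏ k, (b k - z))
            * (starRingEnd ℂ) (∏ k, (1 - (starRingEnd ℂ) (a k) * z)) * u₂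
    rw [evalQ, pA n₁ a, pA n₂ b, pD n₁ a, pD n₂ b, sub_eq_zero]
    linear_combination (-((-w) ^ n₁ * (-w) ^ n₂)) * key
  -- degree bound
  have hdeg1 : ∀ (n : ℕ) (f : Fin n → ℂ),
      (∏ k, (Polynomial.C (f k) - Polynomial.X)).natDegree ≤ n := by
    intro n f
    refine (Polynomial.natDegree_prod_le _ _).trans ?_
    refine (Finset.sum_le_card_nsmul _ _ 1 fun k _ => ?_).trans (by simp)
    exact (Polynomial.natDegree_sub_le _ _).trans (by simp)
  have hdeg2 : ∀ (n : ℕ) (f : Fin n → ℂ),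
      (∏ k, ((1 : Polynomial ℂ) - Polynomial.C ((starRingEnd ℂ) (f k)) * Polynomial.X)).natDegree
        ≤ n := by
    intro n f
    refine (Polynomial.natDegree_prod_le _ _).trans ?_
    refine (Finset.sum_le_card_nsmul _ _ 1 fun k _ => ?_).trans (by simp)
    refine (Polynomial.natDegree_sub_le _ _).trans (max_le (by simp) ?_)
    exact (Polynomial.natDegree_mul_le).trans (by simp)
  have hdegQ : Q.natDegree ≤ n₁ + n₂ := by
    rw [hQdef]
    refine (Polynomial.natDegree_sub_le _ _).trans (max_le ?_ ?_)
    · calc (Polynomial.C ζ₁ * A₁ * D₂).natDegree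
          ≤ (Polynomial.C ζ₁ * A₁).natDegree + D₂.natDegree := Polynomial.natDegree_mul_le
        _ ≤ (0 + n₁) + n₂ := add_le_add
            (Polynomial.natDegree_mul_le.trans (add_le_add (by simp) (hdeg1 n₁ a))) (hdeg2 n₂ b)
        _ = n₁ + n₂ := by omega
    · calc (Polynomial.C ζ₂ * A₂ * D₁).natDegree
          ≤ (Polynomial.C ζ₂ * A₂).natDegree + D₁.natDegree := Polynomial.natDegree_mul_le
        _ ≤ (0 + n₂) + n₁ := add_le_add
            (Polynomial.natDegree_mul_le.trans (add_le_add (by simp) (hdeg1 n₂ b))) (hdeg2 n₁ a)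
        _ = n₁ + n₂ := by omega
  -- the root set
  set s : Finset ℂ := (Finset.univ.image lam) ∪
      ((Finset.univ.filter fun j => lam j ≠ 0).image fun j => ((starRingEnd ℂ) (lam j))⁻¹)
      with hs
  have habs : ∀ j, ‖lam j‖ < 1 := by
    intro j
    have := hlam j
    simpa [mem_ball, dist_zero_right] using this
  have hrefl_gt : ∀ j, lam j ≠ 0 → 1 < ‖((starRingEnd ℂ) (lam j))⁻¹‖ := by
    intro j hj
    have h0 : 0 < ‖lam j‖ := by simpa using hj
    rw [norm_inv, Complex.norm_conj]
    exact (one_lt_inv₀ h0).2 (habs j)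
  have hdisj : Disjoint (Finset.univ.image lam)
      ((Finset.univ.filter fun j => lam j ≠ 0).image fun j => ((starRingEnd ℂ) (lam j))⁻¹) := by
    rw [Finset.disjoint_left]
    intro x hx hx'
    obtain ⟨j, -, rfl⟩ := Finset.mem_image.1 hx
    obtain ⟨i, hi, hxi⟩ := Finset.mem_image.1 hx'
    have h1 : ‖lam j‖ < 1 := habs j
    have h2 : 1 < ‖lam j‖ := by
      rw [← hxi]; exact hrefl_gt i (Finset.mem_filter.1 hi).2
    linarith
  have hcard : m + (m - 1) ≤ s.card := by
    rw [hs, Finset.card_union_of_disjoint hdisj]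
    have c1 : (Finset.univ.image lam).card = m := by
      rw [Finset.card_image_of_injective _ hinj, Finset.card_univ, Fintype.card_fin]
    have c2 : ((Finset.univ.filter fun j => lam j ≠ 0).image
        fun j => ((starRingEnd ℂ) (lam j))⁻¹).card
        = (Finset.univ.filter fun j => lam j ≠ 0).card := by
      apply Finset.card_image_of_injOn
      intro i hi j hj hij
      have hi0 : lam i ≠ 0 := (Finset.mem_filter.1 hi).2
      apply hinj
      have := inv_injective hij
      exact star_injective this
    have c3 : (Finset.univ.filter fun j => lam j = 0).card ≤ 1 := by
      refine Finset.card_le_one.2 fun i hi j hj => ?_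
      apply hinj
      rw [(Finset.mem_filter.1 hi).2, (Finset.mem_filter.1 hj).2]
    have c4 := Finset.card_filter_add_card_filter_not
      (s := (Finset.univ : Finset (Fin m))) (p := fun j => lam j = 0)
    simp only [Finset.card_univ, Fintype.card_fin] at c4
    have : (Finset.univ.filter fun j => ¬ lam j = 0).card
        = (Finset.univ.filter fun j => lam j ≠ 0).card := rfl
    omega
  have hQ0 : Q = 0 := by
    apply Polynomial.eq_zero_of_natDegree_lt_card_of_eval_eq_zero' Q s
    · intro x hx
      rcases Finset.mem_union.1 (hs ▸ hx) with hx' | hx'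
      · obtain ⟨j, -, rfl⟩ := Finset.mem_image.1 hx'
        exact hQlam j
      · obtain ⟨j, hj, rfl⟩ := Finset.mem_image.1 hx'
        exact hQrefl _ (hlam j) (Finset.mem_filter.1 hj).2 (hQlam j)
    · omega
  -- conclusion
  intro z hz
  rw [hb₁ z hz, hb₂ z hz, Finset.prod_div_distrib, Finset.prod_div_distrib]
  have h1 := hpd₁ z hz
  have h2 := hpd₂ z hz
  have h := evalQ z
  rw [hQ0, Polynomial.eval_zero] at h
  rw [mul_div_assoc', mul_div_assoc', div_eq_div_iff h1 h2]
  linear_combination -h
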